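/- Let X₁, ..., Xₙ be independent nonnegative real random variables and τ₁, ..., τₙ reals, and set κᵢ = min(Xᵢ, τᵢ). Suppose a random variable pair (Aᵢ, Iᵢ) for each i satisfies: each Aᵢ, Iᵢ ∈ {0,1}, Aᵢ ≤ Iᵢ almost surely, ∑ᵢ Aᵢ ≤ 1 almost surely, Iᵢ is independent of Xᵢ, and cᵢ = E[(Xᵢ − τᵢ)₊]. Then E[∑ᵢ (Aᵢ Xᵢ − Iᵢ cᵢ)] ≤ E[maxᵢ κᵢ] (where the maximum over an empty index set is 0 if no Aᵢ = 1, and κᵢ ≥ 0 can be assumed by taking τᵢ ≥ 0). -/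

import Mathlib

open MeasureTheory ProbabilityTheory

theorem stmt_7 {Ω : Type*} [MeasurableSpace Ω] (μ : Measure Ω) [IsProbabilityMeasure μ]
    (n : ℕ) (X A I : Fin n → Ω → ℝ) (τ c : Fin n → ℝ)
    (hXm : ∀ i, Measurable (X i)) (hAm : ∀ i, Measurable (A i))
    (hIm : ∀ i, Measurable (I i))
    (hXpos : ∀ i ω, 0 ≤ X i ω) (hτ : ∀ i, 0 ≤ τ i)
    (hA01 : ∀ i ω, A i ω = 0 ∨ A i ω = 1) (hI01 : ∀ i ω, I i ω = 0 ∨ I i ω = 1)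
    (hAI : ∀ i, ∀ᵐ ω ∂μ, A i ω ≤ I i ω)
    (hsum : ∀ᵐ ω ∂μ, ∑ i, A i ω ≤ 1)
    (hXindep : iIndepFun X μ)
    (hindep : ∀ i, IndepFun (I i) (X i) μ)
    (hc : ∀ i, c i = ∫ ω, max (X i ω - τ i) 0 ∂μ)
    (hXint : ∀ i, Integrable (X i) μ)
    (hmaxint : Integrable (fun ω => ⨆ i, min (X i ω) (τ i)) μ) :
    ∫ ω, (∑ i, (A i ω * X i ω - I i ω * c i)) ∂μ
      ≤ ∫ ω, (⨆ i, min (X i ω) (τ i)) ∂μ := by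
  rcases Nat.eq_zero_or_pos n with hn | hn
  · subst hn
    simp
  have hne : Nonempty (Fin n) := ⟨⟨0, hn⟩⟩
  set g : Fin n → Ω → ℝ := fun i ω => max (X i ω - τ i) 0 with hg
  have hgm : ∀ i, Measurable (g i) := fun i =>
    (((hXm i).sub measurable_const).max measurable_const)
  have hgnn : ∀ i ω, 0 ≤ g i ω := fun i ω => le_max_right _ _
  have hgle : ∀ i ω, g i ω ≤ X i ω := by
    intro i ω
    simp only [hg, max_le_iff]
    constructor
    · linarith [hτ i]
    · exact hXpos i ω
  have hgint : ∀ i, Integrable (g i) μ := by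
    intro i
    refine (hXint i).mono (hgm i).aestronglyMeasurable ?_
    filter_upwards with ω
    rw [Real.norm_eq_abs, Real.norm_eq_abs, abs_of_nonneg (hgnn i ω),
      abs_of_nonneg (hXpos i ω)]
    exact hgle i ω
  have hAbd : ∀ i ω, |A i ω| ≤ 1 := by
    intro i ω; rcases hA01 i ω with h | h <;> simp [h]
  have hIbd : ∀ i ω, |I i ω| ≤ 1 := by
    intro i ω; rcases hI01 i ω with h | h <;> simp [h]
  have hAXint : ∀ i, Integrable (fun ω => A i ω * X i ω) μ := fun i =>
    (hXint i).bdd_mul (c := 1) (hAm i).aestronglyMeasurable (Filter.Eventually.of_forall fun ω => by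
      rw [Real.norm_eq_abs]; exact hAbd i ω)
  have hIgint : ∀ i, Integrable (fun ω => I i ω * g i ω) μ := fun i =>
    (hgint i).bdd_mul (c := 1) (hIm i).aestronglyMeasurable (Filter.Eventually.of_forall fun ω => by
      rw [Real.norm_eq_abs]; exact hIbd i ω)
  have hIint : ∀ i, Integrable (I i) μ := by
    intro i
    refine (integrable_const (1 : ℝ)).mono (hIm i).aestronglyMeasurable ?_
    filter_upwards with ω
    simpa using hIbd i ω
  -- Step 1: ∫ I i * c i = ∫ I i * g i
  have hstep1 : ∀ i, ∫ ω, I i ω * c i ∂μ = ∫ ω, I i ω * g i ω ∂μ := by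
    intro i
    have hIg : IndepFun (I i) (g i) μ :=
      (hindep i).comp measurable_id ((measurable_id.sub measurable_const).max
        measurable_const)
    rw [integral_mul_const, hc i]
    exact (hIg.integral_mul_eq_mul_integral (hIm i).aestronglyMeasurable (hgm i).aestronglyMeasurable).symm
  -- Rewrite the LHS integral
  have hint1 : ∀ i, Integrable (fun ω => A i ω * X i ω - I i ω * c i) μ :=
    fun i => (hAXint i).sub ((hIint i).mul_const (c i))
  have hint2 : ∀ i, Integrable (fun ω => A i ω * X i ω - I i ω * g i ω) μ :=
    fun i => (hAXint i).sub (hIgint i)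
  have hLHS : ∫ ω, (∑ i, (A i ω * X i ω - I i ω * c i)) ∂μ
      = ∫ ω, (∑ i, (A i ω * X i ω - I i ω * g i ω)) ∂μ := by
    rw [integral_finset_sum _ (fun i _ => hint1 i),
      integral_finset_sum _ (fun i _ => hint2 i)]
    refine Finset.sum_congr rfl fun i _ => ?_
    rw [integral_sub (hAXint i) ((hIint i).mul_const (c i)),
      integral_sub (hAXint i) (hIgint i), hstep1 i]
  rw [hLHS]
  refine integral_mono_ae
    (integrable_finset_sum _ fun i _ => hint2 i) hmaxint ?_
  have hAIall : ∀ᵐ ω ∂μ, ∀ i, A i ω ≤ I i ω := ae_all_iff.mpr hAI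
  filter_upwards [hAIall, hsum] with ω hAIω hsumω
  -- pointwise bound
  set M : ℝ := ⨆ i, min (X i ω) (τ i) with hM
  have hbdd : BddAbove (Set.range fun i => min (X i ω) (τ i)) :=
    Set.Finite.bddAbove (Set.finite_range _)
  have hκM : ∀ i, min (X i ω) (τ i) ≤ M := fun i => le_ciSup hbdd i
  have hMnn : 0 ≤ M := le_trans (le_min (hXpos ⟨0, hn⟩ ω) (hτ ⟨0, hn⟩)) (hκM ⟨0, hn⟩)
  calc ∑ i, (A i ω * X i ω - I i ω * g i ω)
      ≤ ∑ i, A i ω * min (X i ω) (τ i) := by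
        refine Finset.sum_le_sum fun i _ => ?_
        have h1 : A i ω * g i ω ≤ I i ω * g i ω :=
          mul_le_mul_of_nonneg_right (hAIω i) (hgnn i ω)
        have h2 : X i ω - g i ω = min (X i ω) (τ i) := by
          simp only [hg]
          rcases le_total (X i ω) (τ i) with h | h
          · rw [min_eq_left h, max_eq_right (by linarith)]; ring
          · rw [min_eq_right h, max_eq_left (by linarith)]; ring
        have hAnn : 0 ≤ A i ω := by rcases hA01 i ω with h | h <;> simp [h]
        nlinarith [mul_le_mul_of_nonneg_right (hAIω i) (hgnn i ω)]
    _ ≤ ∑ i, A i ω * M := by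
        refine Finset.sum_le_sum fun i _ => ?_
        have hAnn : 0 ≤ A i ω := by rcases hA01 i ω with h | h <;> simp [h]
        exact mul_le_mul_of_nonneg_left (hκM i) hAnn
    _ = (∑ i, A i ω) * M := by rw [Finset.sum_mul]
    _ ≤ 1 * M := mul_le_mul_of_nonneg_right hsumω hMnn
    _ = M := one_mul M
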